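/- For n ≥ 3, the symmetrized polydisc G_n is not ℂ-convex: for t ∈ [1/√2, 1), the intersection of G_n with the complex line L_t = {(3t(1-2λ), 3t², t³(1-2λ), 0, …, 0) : λ ∈ ℂ} is not connected. -/

import Mathlib

open Metric Finset

/-- The map whose `k`-th component is the `(k+1)`-st elementary symmetric polynomial. -/
noncomputable def symPoly (n : ℕ) (μ : Fin n → ℂ) : Fin n → ℂ :=
  fun k => ∑ s ∈ Finset.powersetCard ((k : ℕ) + 1) Finset.univ, ∏ i ∈ s, μ i

/-- The symmetrized `n`-disc `𝔾ₙ = πₙ(𝔻ⁿ)`. -/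
def symPolydisc (n : ℕ) : Set (Fin n → ℂ) :=
  {z | ∃ μ : Fin n → ℂ, (∀ i, ‖μ i‖ < 1) ∧ symPoly n μ = z}

lemma symPoly_three_const (n : ℕ) (hn : 3 ≤ n) (c : ℂ) :
    symPoly n (fun i => if (i : ℕ) < 3 then c else 0)
      = fun k : Fin n => (Nat.choose 3 ((k : ℕ) + 1) : ℂ) * c ^ ((k : ℕ) + 1) := by
  funext k
  set F : Finset (Fin n) := {⟨0, by omega⟩, ⟨1, by omega⟩, ⟨2, by omega⟩} with hFdef
  have hF : ∀ i : Fin n, i ∈ F ↔ (i : ℕ) < 3 := by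
    intro i
    simp only [hFdef, Finset.mem_insert, Finset.mem_singleton, Fin.ext_iff]
    omega
  have hFcard : F.card = 3 := by
    rw [hFdef]
    rw [Finset.card_insert_of_notMem (by simp [Fin.ext_iff]),
      Finset.card_insert_of_notMem (by simp [Fin.ext_iff]), Finset.card_singleton]
  unfold symPoly
  rw [← Finset.sum_subset (Finset.powersetCard_mono (Finset.subset_univ F))]
  · have hconst : ∀ s ∈ Finset.powersetCard ((k : ℕ) + 1) F,
        (∏ i ∈ s, (fun i : Fin n => if (i : ℕ) < 3 then c else 0) i) = c ^ ((k : ℕ) + 1) := by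
      intro s hs
      rw [Finset.mem_powersetCard] at hs
      have : ∀ i ∈ s, (if (i : ℕ) < 3 then c else 0) = c := by
        intro i hi
        rw [if_pos ((hF i).mp (hs.1 hi))]
      rw [Finset.prod_congr rfl this, Finset.prod_const, hs.2]
    rw [Finset.sum_congr rfl hconst, Finset.sum_const, Finset.card_powersetCard,
      hFcard, nsmul_eq_mul]
  · intro s hs hsF
    rw [Finset.mem_powersetCard] at hs hsF
    have : ¬ s ⊆ F := fun h => hsF ⟨h, hs.2⟩
    obtain ⟨i, hi, hiF⟩ := Finset.not_subset.mp this
    exact Finset.prod_eq_zero hi (by rw [if_neg (fun h => hiF ((hF i).mpr h))])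

lemma key_no_imaginary (n : ℕ) (hn : 3 ≤ n) (t : ℝ) (ht1 : 1 / Real.sqrt 2 ≤ t)
    (s : ℂ) (hre : s.re = 0) (μ : Fin n → ℂ) (hμ : ∀ i, ‖μ i‖ < 1)
    (h1 : symPoly n μ ⟨0, by omega⟩ = 3 * t * s)
    (h2 : symPoly n μ ⟨1, by omega⟩ = 3 * (t : ℂ) ^ 2)
    (h3 : symPoly n μ ⟨2, by omega⟩ = (t : ℂ) ^ 3 * s)
    (h4 : ∀ k : Fin n, 3 ≤ (k : ℕ) → symPoly n μ k = 0) : False := by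
  classical
  set M : Multiset ℂ := (Finset.univ.val : Multiset (Fin n)).map μ with hMdef
  have hMcard : Multiset.card M = n := by
    simp [hMdef]
  have hesymm : ∀ (j : ℕ) (hj : j < n), M.esymm (j + 1) = symPoly n μ ⟨j, hj⟩ := by
    intro j hj
    rw [hMdef, Finset.esymm_map_val]
    rfl
  have he00 : M.esymm 0 = 1 := by simp [Multiset.esymm]
  have he1 : M.esymm 1 = 3 * t * s := by rw [hesymm 0 (by omega)]; exact h1
  have he2 : M.esymm 2 = 3 * (t : ℂ) ^ 2 := by rw [hesymm 1 (by omega)]; exact h2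
  have he3 : M.esymm 3 = (t : ℂ) ^ 3 * s := by rw [hesymm 2 (by omega)]; exact h3
  have he0 : ∀ j : ℕ, 4 ≤ j → j ≤ n → M.esymm j = 0 := by
    intro j hj4 hj
    obtain ⟨j', rfl⟩ : ∃ j', j = j' + 1 := ⟨j - 1, by omega⟩
    rw [hesymm j' (by omega)]
    exact h4 _ (by simp; omega)
  set Q : Cubic ℂ := ⟨1, -(3 * t * s), 3 * (t : ℂ) ^ 2, -((t : ℂ) ^ 3 * s)⟩ with hQdef
  have hQa : Q.a ≠ 0 := one_ne_zero
  -- the product polynomial equals X^(n-3) * Q.toPoly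
  have hprod : (M.map fun r => Polynomial.X - Polynomial.C r).prod
      = Polynomial.X ^ (n - 3) * Q.toPoly := by
    rw [Multiset.prod_X_sub_X_eq_sum_esymm, hMcard]
    rw [← Finset.sum_subset (Finset.range_subset_range.mpr (by omega : 4 ≤ n + 1))]
    · obtain ⟨m, rfl⟩ : ∃ m, n = m + 3 := ⟨n - 3, by omega⟩
      rw [Finset.sum_range_succ, Finset.sum_range_succ, Finset.sum_range_succ,
        Finset.sum_range_one]
      rw [he00, he1, he2, he3]
      have e0 : m + 3 - 0 = m + 3 := by omega
      have e1 : m + 3 - 1 = m + 2 := by omega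
      have e2 : m + 3 - 2 = m + 1 := by omega
      have e3 : m + 3 - 3 = m := by omega
      rw [e0, e1, e2, e3]
      simp only [hQdef, Cubic.toPoly, map_neg, map_mul, map_ofNat, map_pow, map_one]
      ring
    · intro j hj hj4
      rw [Finset.mem_range] at hj hj4
      rw [he0 j (by omega) (by omega)]
      simp
  -- every root of Q.toPoly is one of the μ i
  have hroot : ∀ r : ℂ, Polynomial.eval r Q.toPoly = 0 → ‖r‖ < 1 := by
    intro r hr
    have := congrArg (Polynomial.eval r) hprod
    rw [Polynomial.eval_multiset_prod, Polynomial.eval_mul, Polynomial.eval_pow,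
      Polynomial.eval_X, hr, mul_zero, Multiset.map_map] at this
    have : (0 : ℂ) ∈ M.map (fun a => r - a) := by
      rw [Multiset.prod_eq_zero_iff] at this
      simpa using this
    obtain ⟨a, haM, ha⟩ := Multiset.mem_map.mp this
    obtain ⟨i, _, hi⟩ := Multiset.mem_map.mp haM
    have : r = μ i := (sub_eq_zero.mp ha).trans hi.symm
    rw [this]; exact hμ i
  -- Q splits with three roots
  have hsplits : (Q.toPoly.map (RingHom.id ℂ)).Splits := IsAlgClosed.splits _
  obtain ⟨x, y, z, hxyz⟩ := (Cubic.splits_iff_roots_eq_three hQa).mp hsplits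
  have hb := Cubic.b_eq_three_roots hQa hxyz
  have hc := Cubic.c_eq_three_roots hQa hxyz
  simp only [hQdef, RingHom.id_apply] at hb hc
  have hsum : x + y + z = 3 * t * s := by linear_combination hb
  have hpair : x * y + x * z + y * z = 3 * (t : ℂ) ^ 2 := by linear_combination -hc
  have hmem : ∀ r : ℂ, r ∈ ({x, y, z} : Multiset ℂ) → ‖r‖ < 1 := by
    intro r hrm
    apply hroot
    have : r ∈ (Cubic.map (RingHom.id ℂ) Q).roots := hxyz ▸ hrm
    rw [Cubic.map_roots, Polynomial.map_id] at this
    exact ((Polynomial.mem_roots (Cubic.ne_zero_of_a_ne_zero hQa)).mp this)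
  have hx : ‖x‖ < 1 := hmem x (by simp)
  have hy : ‖y‖ < 1 := hmem y (by simp)
  have hz : ‖z‖ < 1 := hmem z (by simp)
  -- arithmetic contradiction
  have hsq : x ^ 2 + y ^ 2 + z ^ 2 = 9 * (t : ℂ) ^ 2 * s ^ 2 - 6 * (t : ℂ) ^ 2 := by
    linear_combination (x + y + z + 3 * (t : ℂ) * s) * hsum - 2 * hpair
  have hs2 : s ^ 2 = ((-(s.im ^ 2) : ℝ) : ℂ) := by
    apply Complex.ext <;> simp [pow_two, Complex.mul_re, Complex.mul_im, hre]
  have hval : x ^ 2 + y ^ 2 + z ^ 2 = ((-(9 * t ^ 2 * s.im ^ 2) - 6 * t ^ 2 : ℝ) : ℂ) := by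
    rw [hsq, hs2]
    push_cast
    ring
  have hnorm1 : ‖x ^ 2 + y ^ 2 + z ^ 2‖ < 3 := by
    calc ‖x ^ 2 + y ^ 2 + z ^ 2‖ ≤ ‖x ^ 2‖ + ‖y ^ 2‖ + ‖z ^ 2‖ := norm_add₃_le
    _ = ‖x‖ ^ 2 + ‖y‖ ^ 2 + ‖z‖ ^ 2 := by simp [norm_pow]
    _ < 3 := by
        nlinarith [norm_nonneg x, norm_nonneg y, norm_nonneg z]
  have ht2 : (1 : ℝ) / 2 ≤ t ^ 2 := by
    have h0 : (0 : ℝ) < 1 / Real.sqrt 2 := by positivity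
    have habs : (1 / Real.sqrt 2) ^ 2 = 1 / 2 := by
      rw [div_pow, one_pow, Real.sq_sqrt] <;> norm_num
    have := pow_le_pow_left₀ h0.le ht1 2
    linarith
  have hnorm2 : (3 : ℝ) ≤ ‖x ^ 2 + y ^ 2 + z ^ 2‖ := by
    rw [hval, Complex.norm_real, Real.norm_eq_abs]
    rw [abs_of_nonpos (by nlinarith [sq_nonneg s.im, sq_nonneg t])]
    nlinarith [sq_nonneg s.im, sq_nonneg (t * s.im)]
  linarith

/-- For `n ≥ 3` and `t ∈ [1/√2, 1)`, the intersection of `𝔾ₙ` with the complex line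
`L_t = {(3t(1-2λ), 3t², t³(1-2λ), 0, …, 0) : λ ∈ ℂ}` is not connected; in particular
`𝔾ₙ` is not ℂ-convex. -/
theorem symPolydisc_not_Cconvex (n : ℕ) (hn : 3 ≤ n) (t : ℝ)
    (ht : t ∈ Set.Ico (1 / Real.sqrt 2) 1)
    (L : Set (Fin n → ℂ))
    (hL : L = {z | ∃ lam : ℂ, z = fun i : Fin n =>
      if (i : ℕ) = 0 then 3 * (t : ℂ) * (1 - 2 * lam)
      else if (i : ℕ) = 1 then 3 * (t : ℂ) ^ 2
      else if (i : ℕ) = 2 then (t : ℂ) ^ 3 * (1 - 2 * lam)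
      else 0}) :
    ¬ IsConnected (symPolydisc n ∩ L) := by
  intro hconn
  obtain ⟨ht1, htlt⟩ := ht
  have hsqrt2 : (0 : ℝ) < 1 / Real.sqrt 2 := by positivity
  have ht0 : 0 < t := lt_of_lt_of_le hsqrt2 ht1
  set i0 : Fin n := ⟨0, by omega⟩ with hi0def
  set U : Set (Fin n → ℂ) := {f | 0 < (f i0).re} with hUdef
  set V : Set (Fin n → ℂ) := {f | (f i0).re < 0} with hVdef
  have hcontinuous : Continuous fun f : Fin n → ℂ => (f i0).re :=
    Complex.continuous_re.comp (continuous_apply i0)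
  have hU : IsOpen U := isOpen_lt continuous_const hcontinuous
  have hV : IsOpen V := isOpen_lt hcontinuous continuous_const
  -- the cover
  have hcover : symPolydisc n ∩ L ⊆ U ∪ V := by
    rintro w ⟨⟨μ, hμ, hμw⟩, hwL⟩
    rw [hL] at hwL
    obtain ⟨lam, rfl⟩ := hwL
    set s : ℂ := 1 - 2 * lam with hsdef
    by_contra hns
    simp only [Set.mem_union, hUdef, hVdef, Set.mem_setOf_eq, not_or, not_lt] at hns
    rw [if_pos (rfl : ((i0 : Fin n) : ℕ) = 0)] at hns
    have hres : (3 * (t : ℂ) * s).re = 3 * t * s.re := by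
      have h := Complex.re_ofReal_mul (3 * t) s
      push_cast at h
      linarith
    have hre0 : s.re = 0 := by
      obtain ⟨h1, h2⟩ := hns
      rw [hres] at h1 h2
      nlinarith
    refine key_no_imaginary n hn t ht1 s hre0 μ hμ ?_ ?_ ?_ ?_
    · rw [congrFun hμw ⟨0, by omega⟩]
      simp [hsdef]
    · rw [congrFun hμw ⟨1, by omega⟩]
      simp
    · rw [congrFun hμw ⟨2, by omega⟩]
      simp [hsdef]
    · intro k hk
      rw [congrFun hμw k]
      have h0 : ¬ ((k : ℕ) = 0) := by omega
      have h1 : ¬ ((k : ℕ) = 1) := by omega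
      have h2 : ¬ ((k : ℕ) = 2) := by omega
      simp [h0, h1, h2]
  -- the two points
  have hpointG : ∀ c : ℝ, |c| < 1 →
      symPoly n (fun i => if (i : ℕ) < 3 then (c : ℂ) else 0) ∈ symPolydisc n := by
    intro c hc
    refine ⟨_, fun i => ?_, rfl⟩
    split
    · rwa [Complex.norm_real, Real.norm_eq_abs]
    · simp
  have habs_t : |t| < 1 := by rw [abs_of_pos ht0]; exact htlt
  have habs_t' : |(-t)| < 1 := by rwa [abs_neg]
  -- point a (lam = 0)
  have haL : symPoly n (fun i => if (i : ℕ) < 3 then ((t : ℝ) : ℂ) else 0) ∈ L := by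
    rw [hL, symPoly_three_const n hn]
    refine ⟨0, ?_⟩
    funext i
    by_cases h0 : (i : ℕ) = 0
    · rw [if_pos h0, h0]; norm_num
    by_cases h1 : (i : ℕ) = 1
    · rw [if_neg h0, if_pos h1, h1]; norm_num
    by_cases h2 : (i : ℕ) = 2
    · rw [if_neg h0, if_neg h1, if_pos h2, h2]; norm_num
    · rw [if_neg h0, if_neg h1, if_neg h2]
      rw [Nat.choose_eq_zero_of_lt (by omega)]
      simp
  have hbL : symPoly n (fun i => if (i : ℕ) < 3 then ((-t : ℝ) : ℂ) else 0) ∈ L := by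
    rw [hL, symPoly_three_const n hn]
    refine ⟨1, ?_⟩
    funext i
    by_cases h0 : (i : ℕ) = 0
    · rw [if_pos h0, h0]; push_cast; norm_num
    by_cases h1 : (i : ℕ) = 1
    · rw [if_neg h0, if_pos h1, h1]; push_cast; norm_num
    by_cases h2 : (i : ℕ) = 2
    · rw [if_neg h0, if_neg h1, if_pos h2, h2]; push_cast; norm_num; ring
    · rw [if_neg h0, if_neg h1, if_neg h2]
      rw [Nat.choose_eq_zero_of_lt (by omega)]
      simp
  have haU : symPoly n (fun i => if (i : ℕ) < 3 then ((t : ℝ) : ℂ) else 0) ∈ U := by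
    rw [symPoly_three_const n hn, hUdef]
    show (0 : ℝ) < ((((Nat.choose 3 (((i0 : Fin n) : ℕ) + 1)) : ℂ)) * ((t:ℝ):ℂ) ^ (((i0 : Fin n) : ℕ) + 1)).re
    have : ((i0 : Fin n) : ℕ) = 0 := rfl
    rw [this]
    norm_num [ht0]
  have hbV : symPoly n (fun i => if (i : ℕ) < 3 then ((-t : ℝ) : ℂ) else 0) ∈ V := by
    rw [symPoly_three_const n hn, hVdef]
    show ((((Nat.choose 3 (((i0 : Fin n) : ℕ) + 1)) : ℂ)) * ((-t:ℝ):ℂ) ^ (((i0 : Fin n) : ℕ) + 1)).re < 0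
    have : ((i0 : Fin n) : ℕ) = 0 := rfl
    rw [this]
    norm_num [ht0]
  obtain ⟨w, -, hwU, hwV⟩ := hconn.2 U V hU hV hcover
    ⟨_, ⟨hpointG t habs_t, haL⟩, haU⟩ ⟨_, ⟨hpointG (-t) habs_t', hbL⟩, hbV⟩
  simp only [hUdef, hVdef, Set.mem_setOf_eq] at hwU hwV
  linarith
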